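/- Suppose m distinct points in ℙⁿ (n ≥ 2) satisfy the Cayley–Bacharach condition with respect to degree-r hypersurfaces, and let h be the maximum number of points of the set that lie on a common line. If r + 2 ≤ m ≤ 2r + 1 and the points are not all collinear, then m − h ≥ r + 1 and m − h ≤ h, yielding the contradiction r + 1 ≤ m/2 ≤ r + 1/2; hence the points are collinear. -/

import Mathlib

open MvPolynomial

/-- Cayley–Bacharach condition with respect to degree-`r` hypersurfaces. -/
def CayleyBacharach (n r m : ℕ) (P : Fin m → (Fin (n + 1) → ℂ)) : Prop :=
  ∀ i : Fin m, ∀ F : MvPolynomial (Fin (n + 1)) ℂ, F.IsHomogeneous r →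
    (∀ j : Fin m, j ≠ i → eval (P j) F = 0) → eval (P i) F = 0

/-- The family of points indexed by `T` is collinear (lies in a rank-≤2 subspace). -/
def CollinearOn (n m : ℕ) (P : Fin m → (Fin (n + 1) → ℂ)) (T : Set (Fin m)) : Prop :=
  ∃ W : Submodule ℂ (Fin (n + 1) → ℂ), Module.finrank ℂ W ≤ 2 ∧ ∀ i ∈ T, P i ∈ W

/-- linear form with coefficient vector v -/
noncomputable def linF {N : ℕ} (v : Fin N → ℂ) : MvPolynomial (Fin N) ℂ :=
  ∑ i, C (v i) * X i

lemma linF_homog {N : ℕ} (v : Fin N → ℂ) : (linF v).IsHomogeneous 1 := by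
  apply MvPolynomial.IsHomogeneous.sum
  intro i _
  simpa using (MvPolynomial.isHomogeneous_C _ (v i)).mul (MvPolynomial.isHomogeneous_X _ i)

lemma linF_eval {N : ℕ} (v p : Fin N → ℂ) : eval p (linF v) = ∑ i, v i * p i := by
  simp [linF]

/-- a functional vanishing on W and nonzero at q -/
lemma exists_functional {N : ℕ} (W : Submodule ℂ (Fin N → ℂ)) (q : Fin N → ℂ)
    (hq : q ∉ W) : ∃ v : Fin N → ℂ, (∀ w ∈ W, ∑ i, v i * w i = 0) ∧ ∑ i, v i * q i ≠ 0 := by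
  have hπ : W.mkQ q ≠ 0 := by
    simpa [Submodule.Quotient.mk_eq_zero] using hq
  obtain ⟨φ', hφ'⟩ : ∃ φ' : Module.Dual ℂ ((Fin N → ℂ) ⧸ W), φ' (W.mkQ q) ≠ 0 := by
    by_contra hc
    push_neg at hc
    exact hπ ((Module.forall_dual_apply_eq_zero_iff ℂ _).mp hc)
  set φ : Module.Dual ℂ (Fin N → ℂ) := φ'.comp W.mkQ with hφdef
  have key : ∀ p : Fin N → ℂ, ∑ i, (fun i => φ (Pi.single i 1)) i * p i = φ p := by
    intro p
    have : φ p = φ (∑ i, Pi.single i (p i)) := by rw [Finset.univ_sum_single]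
    rw [this, map_sum]
    apply Finset.sum_congr rfl
    intro i _
    have : Pi.single i (p i) = p i • (Pi.single i (1 : ℂ) : Fin N → ℂ) := by
      rw [← Pi.single_smul, smul_eq_mul, mul_one]
    rw [this, map_smul, smul_eq_mul, mul_comm]
  refine ⟨fun i => φ (Pi.single i 1), ?_, ?_⟩
  · intro w hw
    rw [key w]
    simp [hφdef, (Submodule.Quotient.mk_eq_zero W).mpr hw]
  · rw [key q]; exact hφ'

/-- CB violation from a product of linear forms -/
lemma cb_contra {n r m : ℕ} (hr : 0 < r) (P : Fin m → (Fin (n + 1) → ℂ))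
    (hCB : CayleyBacharach n r m P) (i0 : Fin m) (g : Fin r → (Fin (n + 1) → ℂ))
    (hcov : ∀ j, j ≠ i0 → ∃ k : Fin r, ∑ i, g k i * P j i = 0)
    (hnz : ∀ k : Fin r, ∑ i, g k i * P i0 i ≠ 0) : False := by
  set F : MvPolynomial (Fin (n + 1)) ℂ := ∏ k : Fin r, linF (g k) with hF
  have hhom : F.IsHomogeneous r := by
    have := MvPolynomial.IsHomogeneous.prod Finset.univ (fun k : Fin r => linF (g k))
      (fun _ => 1) (fun k _ => linF_homog (g k))
    simpa using this
  have hvan : ∀ j : Fin m, j ≠ i0 → eval (P j) F = 0 := by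
    intro j hj
    obtain ⟨k, hk⟩ := hcov j hj
    rw [hF, map_prod]
    exact Finset.prod_eq_zero (Finset.mem_univ k) (by rw [linF_eval]; exact hk)
  have h0 := hCB i0 F hhom hvan
  rw [hF, map_prod] at h0
  have : ∀ k ∈ (Finset.univ : Finset (Fin r)), eval (P i0) (linF (g k)) ≠ 0 := by
    intro k _
    rw [linF_eval]; exact hnz k
  exact Finset.prod_ne_zero_iff.mpr this h0


lemma matching_aux {α β : Type*} [DecidableEq α] [DecidableEq β] (cl : α → β) :
    ∀ N : ℕ, ∀ M : Finset α, M.card = N →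
    (∀ b, 2 * (M.filter fun x => cl x = b).card ≤ N + 1) →
    ∃ f : ℕ → Finset α, (∀ k, f k ⊆ M) ∧ (∀ k, (f k).card ≤ 2) ∧
      (∀ k, ∀ x ∈ f k, ∀ y ∈ f k, x ≠ y → cl x ≠ cl y) ∧
      (∀ x ∈ M, ∃ k, k < (N + 1) / 2 ∧ x ∈ f k) := by
  intro N
  induction N using Nat.strong_induction_on with
  | _ N ih =>
    intro M hMN hbound
    by_cases h1 : M.card ≤ 1
    · refine ⟨fun _ => M, fun _ => Finset.Subset.refl M, fun _ => h1.trans one_le_two, ?_, ?_⟩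
      · intro k x hx y hy hxy
        exact absurd (Finset.card_le_one.mp h1 x hx y hy) hxy
      · intro x hx
        refine ⟨0, ?_, hx⟩
        have : 1 ≤ M.card := Finset.card_pos.mpr ⟨x, hx⟩
        omega
    · push_neg at h1
      have hMne : M.Nonempty := Finset.card_pos.mp (by omega)
      obtain ⟨x, hxM, hxmax⟩ := Finset.exists_max_image M
        (fun z => (M.filter fun w => cl w = cl z).card) hMne
      have hM'ne : (M.filter fun z => cl z ≠ cl x).Nonempty := by
        by_contra hc
        rw [Finset.not_nonempty_iff_eq_empty, Finset.filter_eq_empty_iff] at hc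
        push_neg at hc
        have : M.filter (fun w => cl w = cl x) = M :=
          Finset.filter_true_of_mem fun z hz => hc hz
        have h2 := hbound (cl x)
        rw [this] at h2
        omega
      obtain ⟨y, hyM', hymax⟩ := Finset.exists_max_image _
        (fun z => ((M.filter fun w => cl w ≠ cl x).filter fun w => cl w = cl z).card) hM'ne
      have hyM : y ∈ M := (Finset.mem_filter.mp hyM').1
      have hyx : cl y ≠ cl x := (Finset.mem_filter.mp hyM').2
      have hxy : x ≠ y := fun e => hyx (by rw [e])
      set M'' := (M.erase x).erase y with hM''
      have hyMx : y ∈ M.erase x := Finset.mem_erase.mpr ⟨fun e => hxy e.symm, hyM⟩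
      have hM''card : M''.card = N - 2 := by
        rw [hM'', Finset.card_erase_of_mem hyMx, Finset.card_erase_of_mem hxM, hMN]; omega
      have hN2 : 2 ≤ N := by omega
      have hM''sub : M'' ⊆ M := (Finset.erase_subset _ _).trans (Finset.erase_subset _ _)
      -- bound for M''
      have hbound'' : ∀ b, 2 * (M''.filter fun z => cl z = b).card ≤ (N - 2) + 1 := by
        intro b
        have hsub : (M''.filter fun z => cl z = b) ⊆ (M.filter fun z => cl z = b) :=
          Finset.filter_subset_filter _ hM''sub
        by_cases hbx : b = cl x ∨ b = cl y
        · -- touched class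
          have hmem : x ∈ (M.filter fun z => cl z = b) ∨ y ∈ (M.filter fun z => cl z = b) := by
            rcases hbx with hbx | hbx
            · exact Or.inl (Finset.mem_filter.mpr ⟨hxM, hbx.symm⟩)
            · exact Or.inr (Finset.mem_filter.mpr ⟨hyM, hbx.symm⟩)
          have hxout : x ∉ M'' := by simp [hM'']
          have hyout : y ∉ M'' := by simp [hM'']
          rcases hmem with hm | hm
          · have hsub2 : (M''.filter fun z => cl z = b) ⊆ (M.filter fun z => cl z = b).erase x :=
              fun z hz => Finset.mem_erase.mpr
                ⟨fun e => hxout (e ▸ (Finset.mem_filter.mp hz).1), hsub hz⟩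
            have := Finset.card_le_card hsub2
            rw [Finset.card_erase_of_mem hm] at this
            have := hbound b
            omega
          · have hsub2 : (M''.filter fun z => cl z = b) ⊆ (M.filter fun z => cl z = b).erase y :=
              fun z hz => Finset.mem_erase.mpr
                ⟨fun e => hyout (e ▸ (Finset.mem_filter.mp hz).1), hsub hz⟩
            have := Finset.card_le_card hsub2
            rw [Finset.card_erase_of_mem hm] at this
            have := hbound b
            omega
        · push_neg at hbx
          obtain ⟨hbx, hby⟩ := hbx
          by_cases hbe : (M.filter fun z => cl z = b).Nonempty
          · obtain ⟨z, hz⟩ := hbe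
            have hzM := (Finset.mem_filter.mp hz).1
            have hzb : cl z = b := (Finset.mem_filter.mp hz).2
            -- class of z within M equals the b-class
            have hzcl : (M.filter fun w => cl w = cl z) = (M.filter fun w => cl w = b) := by
              rw [hzb]
            -- Cb ≤ Cx
            have hCx : (M.filter fun w => cl w = b).card ≤
                (M.filter fun w => cl w = cl x).card := by
              have := hxmax z hzM; rw [hzcl] at this; exact this
            -- Cb ≤ Cy, via M'
            have hzM' : z ∈ M.filter fun w => cl w ≠ cl x :=
              Finset.mem_filter.mpr ⟨hzM, by rw [hzb]; exact hbx⟩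
            have hfilterM' : ∀ c, c ≠ cl x →
                ((M.filter fun w => cl w ≠ cl x).filter fun w => cl w = c) =
                  (M.filter fun w => cl w = c) := by
              intro c hc
              rw [Finset.filter_filter]
              apply Finset.filter_congr
              intro w _
              constructor
              · rintro ⟨_, h⟩; exact h
              · intro h; exact ⟨by rw [h]; exact hc, h⟩
            have hCy : (M.filter fun w => cl w = b).card ≤
                (M.filter fun w => cl w = cl y).card := by
              have := hymax z hzM'
              rw [hfilterM' (cl z) (by rw [hzb]; exact hbx),
                hfilterM' (cl y) hyx, hzb] at this
              exact this
            -- pairwise disjoint: Cb + Cx + Cy ≤ N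
            have hd1 : Disjoint (M.filter fun w => cl w = b) (M.filter fun w => cl w = cl x) :=
              Finset.disjoint_left.mpr fun z hz1 hz2 =>
                hbx (((Finset.mem_filter.mp hz1).2).symm.trans (Finset.mem_filter.mp hz2).2)
            have hd2 : Disjoint ((M.filter fun w => cl w = b) ∪ (M.filter fun w => cl w = cl x))
                (M.filter fun w => cl w = cl y) := by
              rw [Finset.disjoint_union_left]
              constructor
              · exact Finset.disjoint_left.mpr fun z hz1 hz2 =>
                  hby (((Finset.mem_filter.mp hz1).2).symm.trans (Finset.mem_filter.mp hz2).2)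
              · exact Finset.disjoint_left.mpr fun z hz1 hz2 =>
                  hyx ((((Finset.mem_filter.mp hz2).2).symm.trans (Finset.mem_filter.mp hz1).2))
            have hsum : (M.filter fun w => cl w = b).card + (M.filter fun w => cl w = cl x).card
                + (M.filter fun w => cl w = cl y).card ≤ N := by
              have hcup : ((M.filter fun w => cl w = b) ∪ (M.filter fun w => cl w = cl x))
                  ∪ (M.filter fun w => cl w = cl y) ⊆ M := by
                intro z hz
                rcases Finset.mem_union.mp hz with hz | hz
                · rcases Finset.mem_union.mp hz with hz | hz
                  · exact (Finset.mem_filter.mp hz).1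
                  · exact (Finset.mem_filter.mp hz).1
                · exact (Finset.mem_filter.mp hz).1
              have := Finset.card_le_card hcup
              rw [Finset.card_union_of_disjoint hd2, Finset.card_union_of_disjoint hd1, hMN] at this
              exact this
            have hCb1 : 1 ≤ (M.filter fun w => cl w = b).card := Finset.card_pos.mpr ⟨z, hz⟩
            have := Finset.card_le_card hsub
            omega
          · rw [Finset.not_nonempty_iff_eq_empty] at hbe
            have : (M''.filter fun z => cl z = b) = ∅ :=
              Finset.subset_empty.mp (hbe ▸ hsub)
            simp [this]
      obtain ⟨f'', hf''sub, hf''card, hf''cross, hf''cov⟩ :=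
        ih (N - 2) (by omega) M'' hM''card hbound''
      refine ⟨fun k => if k = 0 then {x, y} else f'' (k - 1), ?_, ?_, ?_, ?_⟩
      · intro k
        by_cases hk : k = 0
        · simp only [hk, if_pos rfl]
          intro z hz
          rcases Finset.mem_insert.mp hz with hz | hz
          · exact hz ▸ hxM
          · exact (Finset.mem_singleton.mp hz) ▸ hyM
        · simp only [if_neg hk]
          exact (hf''sub (k - 1)).trans hM''sub
      · intro k
        by_cases hk : k = 0
        · simp only [hk, if_pos rfl]
          exact Finset.card_insert_le _ _ |>.trans (by simp)
        · simp only [if_neg hk]; exact hf''card (k - 1)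
      · intro k u hu v hv huv
        by_cases hk : k = 0
        · simp only [hk, if_pos rfl] at hu hv
          rcases Finset.mem_insert.mp hu with hu | hu
          · rcases Finset.mem_insert.mp hv with hv | hv
            · exact absurd (hu.trans hv.symm) huv
            · rw [hu, Finset.mem_singleton.mp hv]; exact fun e => hyx e.symm
          · rcases Finset.mem_insert.mp hv with hv | hv
            · rw [Finset.mem_singleton.mp hu, hv]; exact hyx
            · exact absurd ((Finset.mem_singleton.mp hu).trans
                (Finset.mem_singleton.mp hv).symm) huv
        · simp only [if_neg hk] at hu hv
          exact hf''cross (k - 1) u hu v hv huv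
      · intro z hz
        by_cases hzxy : z = x ∨ z = y
        · refine ⟨0, by omega, ?_⟩
          simp only [if_pos rfl]
          rcases hzxy with hz' | hz'
          · rw [hz']; exact Finset.mem_insert_self x {y}
          · rw [hz']; exact Finset.mem_insert_of_mem (Finset.mem_singleton_self y)
        · push_neg at hzxy
          have hzM'' : z ∈ M'' :=
            Finset.mem_erase.mpr ⟨hzxy.2, Finset.mem_erase.mpr ⟨hzxy.1, hz⟩⟩
          obtain ⟨k, hk, hzk⟩ := hf''cov z hzM''
          refine ⟨k + 1, by omega, ?_⟩
          simp only [if_neg (Nat.succ_ne_zero k)]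
          simpa using hzk

open Submodule Module in
lemma finrank_span_pair_le {V : Type*} [AddCommGroup V] [Module ℂ V] (a b : V) :
    finrank ℂ (span ℂ ({a, b} : Set V)) ≤ 2 := by
  classical
  have := finrank_span_le_card (R := ℂ) ({a, b} : Set V)
  refine this.trans ?_
  rw [Set.toFinset_insert, Set.toFinset_singleton]
  exact (Finset.card_insert_le _ _).trans (by simp)

/-- for `m` distinct points of `ℙⁿ` (`n ≥ 2`) satisfying Cayley–Bacharach in
degree `r ≥ 2`, with `h` the maximal number of collinear points and `r + 2 ≤ m ≤ 2r + 1`: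
if the points were not all collinear then `m - h ≥ r + 1` and `m - h ≤ h` (giving the
contradiction `r + 1 ≤ m/2 ≤ r + 1/2`); hence the points are all collinear. -/
theorem stmt4 (n r m h : ℕ) (hn : 2 ≤ n) (hr : 2 ≤ r)
    (hm1 : r + 2 ≤ m) (hm2 : m ≤ 2 * r + 1)
    (P : Fin m → (Fin (n + 1) → ℂ))
    (hP0 : ∀ i, P i ≠ 0)
    (hdist : ∀ i j : Fin m, i ≠ j → ∀ c : ℂ, P i ≠ c • P j)
    (hCB : CayleyBacharach n r m P)
    (hh : IsGreatest {t : ℕ | ∃ T : Finset (Fin m), T.card = t ∧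
      CollinearOn n m P (T : Set (Fin m))} h) :
    (¬ CollinearOn n m P Set.univ → r + 1 ≤ m - h ∧ m - h ≤ h) ∧
      CollinearOn n m P Set.univ := by
  classical
  suffices hcol : CollinearOn n m P Set.univ by
    exact ⟨fun hn' => (hn' hcol).elim, hcol⟩
  by_contra hNC
  obtain ⟨T, hTcard, W, hW2, hTW⟩ := hh.1
  obtain ⟨i₀, hi₀⟩ : ∃ i, P i ∉ W := by
    by_contra hc
    push_neg at hc
    exact hNC ⟨W, hW2, fun i _ => hc i⟩
  -- Step 1 : h + r + 1 ≤ m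
  have key : h + r + 1 ≤ m := by
    by_contra hkey
    push_neg at hkey
    set S : Finset (Fin m) := (Finset.univ.filter fun j => P j ∉ W).erase i₀ with hS
    have hTA : T ⊆ Finset.univ.filter fun j => P j ∈ W := by
      intro i hi
      exact Finset.mem_filter.mpr ⟨Finset.mem_univ i, hTW i hi⟩
    have hhA : h ≤ (Finset.univ.filter fun j => P j ∈ W).card :=
      hTcard ▸ Finset.card_le_card hTA
    have hi₀mem : i₀ ∈ Finset.univ.filter fun j => (P j ∉ W) :=
      Finset.mem_filter.mpr ⟨Finset.mem_univ i₀, hi₀⟩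
    have hcards : (Finset.univ.filter fun j => P j ∈ W).card
        + (Finset.univ.filter fun j => ¬ (P j ∈ W)).card = m := by
      rw [Finset.card_filter_add_card_filter_not]
      simp
    have hScard : S.card + 1 = (Finset.univ.filter fun j => P j ∉ W).card := by
      rw [hS, Finset.card_erase_of_mem hi₀mem]
      have : 1 ≤ (Finset.univ.filter fun j => P j ∉ W).card :=
        Finset.card_pos.mpr ⟨i₀, hi₀mem⟩
      omega
    have hSr : S.card < r := by omega
    obtain ⟨v₀, hv₀W, hv₀q⟩ := exists_functional W (P i₀) hi₀
    have hu : ∀ j, j ∈ S → ∃ v : Fin (n + 1) → ℂ,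
        (∑ i, v i * P j i = 0) ∧ ∑ i, v i * P i₀ i ≠ 0 := by
      intro j hj
      have hji₀ : j ≠ i₀ := (Finset.mem_erase.mp hj).1
      have hq : P i₀ ∉ Submodule.span ℂ {P j} := by
        intro hmem
        obtain ⟨c, hc⟩ := Submodule.mem_span_singleton.mp hmem
        exact hdist i₀ j (fun e => hji₀ e.symm) c hc.symm
      obtain ⟨v, hv1, hv2⟩ := exists_functional (Submodule.span ℂ {P j}) (P i₀) hq
      exact ⟨v, hv1 (P j) (Submodule.mem_span_singleton_self _), hv2⟩
    choose! u hu1 hu2 using hu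
    set e := S.equivFin with he
    set g : Fin r → (Fin (n + 1) → ℂ) := fun k =>
      if hk : (k : ℕ) < S.card then u (e.symm ⟨(k : ℕ), hk⟩ : Fin m) else v₀ with hg
    refine cb_contra (by omega) P hCB i₀ g ?_ ?_
    · intro j hj
      by_cases hjW : P j ∈ W
      · refine ⟨⟨r - 1, by omega⟩, ?_⟩
        have : ¬ ((r - 1 : ℕ) < S.card) := by omega
        simp only [hg, this, dif_neg, not_false_iff]
        exact hv₀W (P j) hjW
      · have hjS : j ∈ S := Finset.mem_erase.mpr
          ⟨hj, Finset.mem_filter.mpr ⟨Finset.mem_univ j, hjW⟩⟩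
        have hlt : ((e ⟨j, hjS⟩ : Fin S.card) : ℕ) < S.card := (e ⟨j, hjS⟩).2
        refine ⟨⟨(e ⟨j, hjS⟩ : Fin S.card), lt_trans hlt hSr⟩, ?_⟩
        simp only [hg, dif_pos hlt]
        have heq : (⟨((e ⟨j, hjS⟩ : Fin S.card) : ℕ), hlt⟩ : Fin S.card) = e ⟨j, hjS⟩ :=
          Fin.ext rfl
        rw [heq, Equiv.symm_apply_apply]
        exact hu1 j hjS
    · intro k
      by_cases hk : (k : ℕ) < S.card
      · simp only [hg, dif_pos hk]
        exact hu2 _ (e.symm ⟨(k : ℕ), hk⟩).2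
      · simp only [hg, dif_neg hk]
        exact hv₀q
  -- Step 2
  have hhr : h ≤ r := by
    have hTm : T.card ≤ m := by
      have := Finset.card_le_univ T
      simpa using this
    omega
  set M : Finset (Fin m) := Finset.univ.erase i₀ with hM
  have hMcard : M.card = m - 1 := by
    rw [hM, Finset.card_erase_of_mem (Finset.mem_univ i₀)]
    simp
  set cl : Fin m → Submodule ℂ (Fin (n + 1) → ℂ) :=
    fun j => Submodule.span ℂ {P i₀, P j} with hcl
  have hbound : ∀ b, 2 * (M.filter fun z => cl z = b).card ≤ M.card + 1 := by
    intro b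
    rcases (M.filter fun z => cl z = b).eq_empty_or_nonempty with hC | hC
    · rw [hC]; simp
    · obtain ⟨j₀, hj₀⟩ := hC
      have hj₀M := (Finset.mem_filter.mp hj₀).1
      have hj₀b : cl j₀ = b := (Finset.mem_filter.mp hj₀).2
      have hi₀notC : i₀ ∉ (M.filter fun z => cl z = b) := by
        intro hmem
        exact (Finset.mem_erase.mp (Finset.mem_filter.mp hmem).1).1 rfl
      have hcolC : CollinearOn n m P ((insert i₀ (M.filter fun z => cl z = b) :
          Finset (Fin m)) : Set (Fin m)) := by
        refine ⟨cl j₀, finrank_span_pair_le _ _, ?_⟩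
        intro i hi
        rw [Finset.coe_insert, Set.mem_insert_iff] at hi
        rcases hi with hi | hi
        · subst hi
          exact Submodule.subset_span (Set.mem_insert _ _)
        · rw [Finset.mem_coe, Finset.mem_filter] at hi
          have : P i ∈ cl i := Submodule.subset_span (Set.mem_insert_iff.mpr (Or.inr rfl))
          rw [hi.2, ← hj₀b] at this
          exact this
      have hle : (insert i₀ (M.filter fun z => cl z = b)).card ≤ h :=
        hh.2 ⟨_, rfl, hcolC⟩
      rw [Finset.card_insert_of_notMem hi₀notC] at hle
      omega
  obtain ⟨f, hfsub, hfcard, hfcross, hfcov⟩ := matching_aux cl M.card M rfl hbound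
  have hpart : ∀ k : ℕ, ∃ v : Fin (n + 1) → ℂ,
      (∀ j ∈ f k, ∑ i, v i * P j i = 0) ∧ ∑ i, v i * P i₀ i ≠ 0 := by
    intro k
    have hq : P i₀ ∉ Submodule.span ℂ (P '' ((f k : Finset (Fin m)) : Set (Fin m))) := by
      have hne : ∀ j ∈ f k, j ≠ i₀ := by
        intro j hj
        exact (Finset.mem_erase.mp (hfsub k hj)).1
      have hcard := hfcard k
      interval_cases hck : (f k).card
      · have : f k = ∅ := Finset.card_eq_zero.mp hck
        rw [this]
        simp only [Finset.coe_empty, Set.image_empty, Submodule.span_empty]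
        intro hmem
        exact hP0 i₀ ((Submodule.mem_bot ℂ).mp hmem)
      · obtain ⟨a, ha⟩ := Finset.card_eq_one.mp hck
        rw [ha]
        simp only [Finset.coe_singleton, Set.image_singleton]
        intro hmem
        obtain ⟨c, hc⟩ := Submodule.mem_span_singleton.mp hmem
        have hai : a ≠ i₀ := hne a (ha ▸ Finset.mem_singleton_self a)
        exact hdist i₀ a (fun e => hai e.symm) c hc.symm
      · obtain ⟨a, b, hab, hfk⟩ := Finset.card_eq_two.mp hck
        have haM : a ∈ f k := hfk ▸ Finset.mem_insert_self a {b}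
        have hbM : b ∈ f k := hfk ▸ Finset.mem_insert_of_mem (Finset.mem_singleton_self b)
        rw [hfk]
        intro hmem
        have himg : (P '' (({a, b} : Finset (Fin m)) : Set (Fin m))) = {P a, P b} := by
          rw [Finset.coe_insert, Finset.coe_singleton, Set.image_insert_eq,
            Set.image_singleton]
        rw [himg] at hmem
        obtain ⟨α, β, heq⟩ := Submodule.mem_span_pair.mp hmem
        have hai : i₀ ≠ a := fun e => (hne a haM) e.symm
        have hbi : i₀ ≠ b := fun e => (hne b hbM) e.symm
        have hα : α ≠ 0 := by
          intro h0
          rw [h0, zero_smul, zero_add] at heq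
          exact hdist i₀ b hbi β heq.symm
        have hβ : β ≠ 0 := by
          intro h0
          rw [h0, zero_smul, add_zero] at heq
          exact hdist i₀ a hai α heq.symm
        -- derive cl a = cl b, contradicting cross-class
        have hPa : P a ∈ Submodule.span ℂ {P i₀, P b} := by
          apply Submodule.mem_span_pair.mpr
          refine ⟨α⁻¹, -(α⁻¹ * β), ?_⟩
          rw [← heq]
          match_scalars <;> field_simp <;> ring
        have hPb : P b ∈ Submodule.span ℂ {P i₀, P a} := by
          apply Submodule.mem_span_pair.mpr
          refine ⟨β⁻¹, -(β⁻¹ * α), ?_⟩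
          rw [← heq]
          match_scalars <;> field_simp <;> ring
        have hclab : cl a = cl b := by
          apply le_antisymm
          · rw [hcl, Submodule.span_le]
            intro z hz
            rcases hz with hz | hz
            · rw [hz]; exact Submodule.subset_span (Set.mem_insert _ _)
            · rw [Set.mem_singleton_iff.mp hz]; exact hPa
          · rw [hcl, Submodule.span_le]
            intro z hz
            rcases hz with hz | hz
            · rw [hz]; exact Submodule.subset_span (Set.mem_insert _ _)
            · rw [Set.mem_singleton_iff.mp hz]; exact hPb
        exact hfcross k a haM b hbM hab hclab
    obtain ⟨v, hv1, hv2⟩ := exists_functional _ (P i₀) hq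
    refine ⟨v, ?_, hv2⟩
    intro j hj
    exact hv1 (P j) (Submodule.subset_span ⟨j, Finset.mem_coe.mpr hj, rfl⟩)
  choose g' hg1 hg2 using hpart
  have hm2r : (M.card + 1) / 2 ≤ r := by omega
  refine cb_contra (by omega) P hCB i₀ (fun k => g' (k : ℕ)) ?_ ?_
  · intro j hj
    have hjM : j ∈ M := Finset.mem_erase.mpr ⟨hj, Finset.mem_univ j⟩
    obtain ⟨k, hk, hjk⟩ := hfcov j hjM
    exact ⟨⟨k, by omega⟩, hg1 k j hjk⟩
  · intro k
    exact hg2 (k : ℕ)
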